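/- Let θ be an infinite cardinal and let λ be the least cardinal with 2^θ < 2^λ. Then λ is a regular uncountable cardinal, θ < λ ≤ 2^θ, and 2^{<λ} = 2^θ. -/

import Mathlib

open Cardinal

universe u

/-- Let `θ` be an infinite cardinal and let `lam` be the least cardinal with `2^θ < 2^lam`.
Then `lam` is a regular uncountable cardinal, `θ < lam ≤ 2^θ`, and `2^{<lam} = 2^θ`. -/
theorem stmt8 (θ lam : Cardinal.{u}) (hθ : ℵ₀ ≤ θ)
    (h1 : (2 : Cardinal.{u}) ^ θ < 2 ^ lam)
    (h2 : ∀ κ : Cardinal.{u}, κ < lam → ¬ ((2 : Cardinal.{u}) ^ θ < 2 ^ κ)) :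
    lam.IsRegular ∧ ℵ₀ < lam ∧ θ < lam ∧ lam ≤ 2 ^ θ ∧
      (2 : Cardinal.{u}) ^< lam = 2 ^ θ := by
  have h2' : ∀ κ : Cardinal.{u}, κ < lam → (2 : Cardinal.{u}) ^ κ ≤ 2 ^ θ :=
    fun κ hκ => le_of_not_gt (h2 κ hκ)
  have hθlam : θ < lam := by
    by_contra h
    exact absurd (power_le_power_left two_ne_zero (le_of_not_gt h)) (not_le_of_gt h1)
  have halam : ℵ₀ < lam := hθ.trans_lt hθlam
  have hle : lam ≤ 2 ^ θ := by
    by_contra h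
    exact h2 (2 ^ θ) (lt_of_not_ge h) (cantor _)
  have hpowlt : (2 : Cardinal.{u}) ^< lam = 2 ^ θ :=
    le_antisymm (powerlt_le.2 fun x hx => h2' x hx) (le_powerlt 2 hθlam)
  refine ⟨⟨halam.le, ?_⟩, halam, hθlam, hle, hpowlt⟩
  by_contra hcof
  have hcof : lam.ord.cof < lam := lt_of_not_ge hcof
  have hcofℵ : ℵ₀ ≤ lam.ord.cof :=
    Ordinal.aleph0_le_cof.2 (Cardinal.isSuccLimit_ord halam.le)
  obtain ⟨ι, f, hlsub, hι⟩ := Ordinal.exists_lsub_cof lam.ord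
  -- each succ (f i) has card < lam
  have hcards : ∀ i, (Order.succ (f i)).card < lam := by
    intro i
    rw [Ordinal.card_succ]
    have hfi : f i < lam.ord := hlsub ▸ Ordinal.lt_lsub f i
    exact Cardinal.add_lt_of_lt halam.le (Cardinal.lt_ord.1 hfi)
      (one_lt_aleph0.trans halam)
  -- lam is at most the sum of the cards of succ (f i)
  have hsum : lam ≤ Cardinal.sum fun i => (Order.succ (f i)).card := by
    have h1' : lam = (Ordinal.lsub f).card := by rw [hlsub, Cardinal.card_ord]
    have h2'' : Ordinal.lsub f = ⨆ i, Order.succ (f i) := rfl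
    rw [h1', h2'']
    exact Ordinal.card_iSup_le_sum_card fun i => Order.succ (f i)
  have hpow : (2 : Cardinal.{u}) ^ lam ≤ 2 ^ θ := by
    calc (2 : Cardinal.{u}) ^ lam
        ≤ 2 ^ Cardinal.sum fun i => (Order.succ (f i)).card :=
          power_le_power_left two_ne_zero hsum
      _ = Cardinal.prod fun i => 2 ^ (Order.succ (f i)).card := power_sum 2 _
      _ ≤ Cardinal.prod fun _ : ι => 2 ^ θ :=
          prod_le_prod _ _ fun i => h2' _ (hcards i)
      _ = (2 ^ θ) ^ #ι := prod_const' ι _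
      _ = (2 ^ θ) ^ lam.ord.cof := by rw [hι]
      _ = 2 ^ (θ * lam.ord.cof) := (power_mul).symm
      _ = 2 ^ max θ lam.ord.cof := by rw [mul_eq_max hθ hcofℵ]
      _ ≤ 2 ^ θ := h2' _ (max_lt hθlam hcof)
  exact absurd hpow (not_le_of_gt h1)
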